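/- Let n ≥ 1, let G : ℝⁿ → (n×n real symmetric matrices) be smooth with smooth inverse K = G⁻¹, and let ξ : ℝⁿ → ℝⁿ, τ : ℝⁿ → ℝ be smooth with £_ξ G = τ·G. Then the Lie derivative of the Christoffel symbols of G satisfies £_ξ Γ^κ_{μν} = (1/2) [ (∂τ/∂q^μ) δ^κ_ν + (∂τ/∂q^ν) δ^κ_μ − (Σ_ρ K^{κρ} ∂τ/∂q^ρ) G_{μν} ]. -/

import Mathlib

open scoped BigOperators

/-- Partial derivative `∂f/∂q^α` of a scalar function on `ℝⁿ`. -/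
noncomputable def pd {n : ℕ} (f : (Fin n → ℝ) → ℝ) (α : Fin n) (q : Fin n → ℝ) : ℝ :=
  fderiv ℝ f q (Pi.single α 1)

/-- Lie derivative `(£_ξ G)_{μν}`. -/
noncomputable def lieG {n : ℕ} (ξ : (Fin n → ℝ) → Fin n → ℝ)
    (G : (Fin n → ℝ) → Fin n → Fin n → ℝ) (q : Fin n → ℝ) (μ ν : Fin n) : ℝ :=
  ∑ α : Fin n, (ξ q α * pd (fun p => G p μ ν) α q
      + pd (fun p => ξ p α) μ q * G q α ν
      + pd (fun p => ξ p α) ν q * G q μ α)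

/-- Christoffel symbols `Γ^κ_{μν} = (1/2) Σ_ρ K^{κρ}(∂_μ G_{ρν} + ∂_ν G_{ρμ} − ∂_ρ G_{μν})`,
where `K = G⁻¹`. -/
noncomputable def christoffel {n : ℕ} (G K : (Fin n → ℝ) → Fin n → Fin n → ℝ)
    (q : Fin n → ℝ) (κ μ ν : Fin n) : ℝ :=
  (1 / 2) * ∑ ρ : Fin n, K q κ ρ *
    (pd (fun p => G p ρ ν) μ q + pd (fun p => G p ρ μ) ν q - pd (fun p => G p μ ν) ρ q)

/-- Lie derivative of the Christoffel symbols along `ξ`: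
`£_ξ Γ^κ_{μν} = Σ_ρ ξ^ρ ∂_ρ Γ^κ_{μν} − Σ_ρ (∂_ρ ξ^κ) Γ^ρ_{μν} + Σ_ρ (∂_μ ξ^ρ) Γ^κ_{ρν}
 + Σ_ρ (∂_ν ξ^ρ) Γ^κ_{μρ} + ∂²ξ^κ/∂q^μ∂q^ν`. -/
noncomputable def lieGamma {n : ℕ} (ξ : (Fin n → ℝ) → Fin n → ℝ)
    (Γ : (Fin n → ℝ) → Fin n → Fin n → Fin n → ℝ) (q : Fin n → ℝ) (κ μ ν : Fin n) : ℝ :=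
  (∑ ρ : Fin n, ξ q ρ * pd (fun p => Γ p κ μ ν) ρ q)
  - (∑ ρ : Fin n, pd (fun p => ξ p κ) ρ q * Γ q ρ μ ν)
  + (∑ ρ : Fin n, pd (fun p => ξ p ρ) μ q * Γ q κ ρ ν)
  + (∑ ρ : Fin n, pd (fun p => ξ p ρ) ν q * Γ q κ μ ρ)
  + pd (fun p => pd (fun r => ξ r κ) ν p) μ q


lemma infty_succ_le : ((⊤:ℕ∞) : WithTop ℕ∞) + 1 ≤ ((⊤:ℕ∞) : WithTop ℕ∞) := by norm_cast

lemma ContDiff.dAt {n : ℕ} {f : (Fin n → ℝ) → ℝ} (hf : ContDiff ℝ (⊤:ℕ∞) f)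
    (q : Fin n → ℝ) : DifferentiableAt ℝ f q :=
  ((hf.differentiable (by simp)) q)

lemma contDiff_pd {n : ℕ} {f : (Fin n → ℝ) → ℝ} (hf : ContDiff ℝ (⊤:ℕ∞) f) (α : Fin n) :
    ContDiff ℝ (⊤:ℕ∞) (fun q => pd f α q) :=
  (hf.fderiv_right infty_succ_le).clm_apply contDiff_const

lemma pd_const {n : ℕ} (c : ℝ) (α : Fin n) (q : Fin n → ℝ) :
    pd (fun _ => c) α q = 0 := by
  unfold pd; rw [fderiv_fun_const]; rfl

lemma pd_add {n : ℕ} {f g : (Fin n → ℝ) → ℝ} {q : Fin n → ℝ}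
    (hf : DifferentiableAt ℝ f q) (hg : DifferentiableAt ℝ g q) (α : Fin n) :
    pd (fun p => f p + g p) α q = pd f α q + pd g α q := by
  unfold pd; rw [fderiv_fun_add hf hg]; rfl

lemma pd_sub {n : ℕ} {f g : (Fin n → ℝ) → ℝ} {q : Fin n → ℝ}
    (hf : DifferentiableAt ℝ f q) (hg : DifferentiableAt ℝ g q) (α : Fin n) :
    pd (fun p => f p - g p) α q = pd f α q - pd g α q := by
  unfold pd; rw [fderiv_fun_sub hf hg]; rfl

lemma pd_mul {n : ℕ} {f g : (Fin n → ℝ) → ℝ} {q : Fin n → ℝ}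
    (hf : DifferentiableAt ℝ f q) (hg : DifferentiableAt ℝ g q) (α : Fin n) :
    pd (fun p => f p * g p) α q = pd f α q * g q + f q * pd g α q := by
  unfold pd; rw [fderiv_fun_mul hf hg]; simp; ring

lemma pd_const_mul {n : ℕ} {f : (Fin n → ℝ) → ℝ} {q : Fin n → ℝ}
    (hf : DifferentiableAt ℝ f q) (c : ℝ) (α : Fin n) :
    pd (fun p => c * f p) α q = c * pd f α q := by
  unfold pd; rw [fderiv_const_mul hf]; rfl

lemma pd_sum {n m : ℕ} {f : Fin m → (Fin n → ℝ) → ℝ} {q : Fin n → ℝ}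
    (hf : ∀ i, DifferentiableAt ℝ (f i) q) (α : Fin n) :
    pd (fun p => ∑ i : Fin m, f i p) α q = ∑ i : Fin m, pd (f i) α q := by
  unfold pd
  rw [fderiv_fun_sum (fun i _ => hf i)]
  simp

lemma pd_comm {n : ℕ} {f : (Fin n → ℝ) → ℝ} (hf : ContDiff ℝ (⊤:ℕ∞) f) (μ ν : Fin n)
    (q : Fin n → ℝ) :
    pd (fun p => pd f μ p) ν q = pd (fun p => pd f ν p) μ q := by
  have hsymm : IsSymmSndFDerivAt ℝ f q := by
    apply ContDiffAt.isSymmSndFDerivAt hf.contDiffAt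
    rw [show ((2:WithTop ℕ∞)) = (((2:ℕ∞)):WithTop ℕ∞) by rfl]
    rw [minSmoothness_of_isRCLikeNormedField]; exact WithTop.coe_le_coe.2 le_top
  have hd : DifferentiableAt ℝ (fderiv ℝ f) q :=
    ((hf.fderiv_right infty_succ_le).differentiable
      (by simp)).differentiableAt
  have h1 : ∀ (v w : Fin n → ℝ), fderiv ℝ (fun p => fderiv ℝ f p v) q w
      = fderiv ℝ (fderiv ℝ f) q w v := by
    intro v w
    rw [fderiv_clm_apply hd (differentiableAt_const v)]
    simp
  unfold pd
  rw [h1, h1]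
  exact hsymm _ _

/-- `A ρ μ ν = ∂_μ G_{ρν} + ∂_ν G_{ρμ} - ∂_ρ G_{μν}` (twice the Christoffel of first kind). -/
noncomputable def Aform {n : ℕ} (dg : Fin n → Fin n → Fin n → ℝ) (ρ μ ν : Fin n) : ℝ :=
  dg ρ ν μ + dg ρ μ ν - dg μ ν ρ

noncomputable def Gam {n : ℕ} (k : Fin n → Fin n → ℝ) (dg : Fin n → Fin n → Fin n → ℝ)
    (κ μ ν : Fin n) : ℝ :=
  (1/2) * ∑ ρ : Fin n, k κ ρ * Aform dg ρ μ ν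

/-- value of `∂_σ Γ^κ_{μν}`. -/
noncomputable def dGam {n : ℕ} (k : Fin n → Fin n → ℝ) (dk dg : Fin n → Fin n → Fin n → ℝ)
    (ddg : Fin n → Fin n → Fin n → Fin n → ℝ) (κ μ ν σ : Fin n) : ℝ :=
  (1/2) * ∑ ρ : Fin n, (dk κ ρ σ * Aform dg ρ μ ν
    + k κ ρ * (ddg ρ ν μ σ + ddg ρ μ ν σ - ddg μ ν ρ σ))

section Alg
variable {n : ℕ} (g k : Fin n → Fin n → ℝ) (dg dk : Fin n → Fin n → Fin n → ℝ)
  (ddg : Fin n → Fin n → Fin n → Fin n → ℝ)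

/-- Step B: lowering an index on Γ gives A/2. -/
lemma stepB (hg : ∀ a b, g a b = g b a) (hk : ∀ a b, k a b = k b a)
    (hkg : ∀ a b, (∑ ρ : Fin n, k a ρ * g ρ b) = if a = b then (1:ℝ) else 0)
    (lam μ ν : Fin n) :
    (∑ κ : Fin n, g lam κ * Gam k dg κ μ ν) = (1/2) * Aform dg lam μ ν := by
  have key : ∀ ρ, (∑ κ : Fin n, g lam κ * k κ ρ) = if ρ = lam then (1:ℝ) else 0 := by
    intro ρ; rw [← hkg ρ lam]
    exact Finset.sum_congr rfl fun κ _ => by rw [hg lam κ, hk κ ρ]; ring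
  calc (∑ κ : Fin n, g lam κ * Gam k dg κ μ ν)
      = ∑ κ : Fin n, ∑ ρ : Fin n, (1/2) * (g lam κ * k κ ρ * Aform dg ρ μ ν) := by
        apply Finset.sum_congr rfl; intro κ _
        unfold Gam; rw [Finset.mul_sum, Finset.mul_sum]
        exact Finset.sum_congr rfl fun ρ _ => by ring
    _ = ∑ ρ : Fin n, (∑ κ : Fin n, g lam κ * k κ ρ) * ((1/2) * Aform dg ρ μ ν) := by
        rw [Finset.sum_comm]
        exact Finset.sum_congr rfl fun ρ _ => by
          rw [Finset.sum_mul]; exact Finset.sum_congr rfl fun κ _ => by ring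
    _ = ∑ ρ : Fin n, (if ρ = lam then (1:ℝ) else 0) * ((1/2) * Aform dg ρ μ ν) := by
        exact Finset.sum_congr rfl fun ρ _ => by rw [key]
    _ = (1/2) * Aform dg lam μ ν := by
        simp only [ite_mul, one_mul, zero_mul, Finset.sum_ite_eq, Finset.sum_ite_eq', Finset.mem_univ, if_true]

/-- Step A: lowering an index on ∂Γ. -/
lemma stepA (hg : ∀ a b, g a b = g b a) (hk : ∀ a b, k a b = k b a)
    (hkg : ∀ a b, (∑ ρ : Fin n, k a ρ * g ρ b) = if a = b then (1:ℝ) else 0)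
    (hdg : ∀ a b c, dg a b c = dg b a c)
    (hdksymm : ∀ a b c, dk a b c = dk b a c)
    (hdk : ∀ a b c, (∑ ρ : Fin n, (dk a ρ c * g ρ b + k a ρ * dg ρ b c)) = 0)
    (lam μ ν σ : Fin n) :
    (∑ κ : Fin n, g lam κ * dGam k dk dg ddg κ μ ν σ)
      = (1/2) * (ddg lam ν μ σ + ddg lam μ ν σ - ddg μ ν lam σ)
        - ∑ α : Fin n, dg lam α σ * Gam k dg α μ ν := by
  have key : ∀ ρ, (∑ κ : Fin n, g lam κ * k κ ρ) = if ρ = lam then (1:ℝ) else 0 := by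
    intro ρ; rw [← hkg ρ lam]
    exact Finset.sum_congr rfl fun κ _ => by rw [hg lam κ, hk κ ρ]; ring
  have keydk : ∀ ρ, (∑ κ : Fin n, g lam κ * dk κ ρ σ)
      = -∑ κ : Fin n, k ρ κ * dg κ lam σ := by
    intro ρ
    have h0 := hdk ρ lam σ
    rw [Finset.sum_add_distrib] at h0
    have h1 : (∑ κ : Fin n, g lam κ * dk κ ρ σ) = ∑ κ : Fin n, dk ρ κ σ * g κ lam :=
      Finset.sum_congr rfl fun κ _ => by rw [hg lam κ, hdksymm κ ρ σ]; ring
    rw [h1]; linarith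
  have e3 : (∑ ρ : Fin n, (∑ κ : Fin n, k ρ κ * dg κ lam σ) * ((1/2) * Aform dg ρ μ ν))
      = ∑ α : Fin n, dg lam α σ * Gam k dg α μ ν := by
    calc (∑ ρ : Fin n, (∑ κ : Fin n, k ρ κ * dg κ lam σ) * ((1/2) * Aform dg ρ μ ν))
        = ∑ ρ : Fin n, ∑ κ : Fin n, k ρ κ * dg κ lam σ * ((1/2) * Aform dg ρ μ ν) := by
          exact Finset.sum_congr rfl fun ρ _ => Finset.sum_mul _ _ _
      _ = ∑ κ : Fin n, ∑ ρ : Fin n, k ρ κ * dg κ lam σ * ((1/2) * Aform dg ρ μ ν) :=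
          Finset.sum_comm
      _ = ∑ α : Fin n, dg lam α σ * Gam k dg α μ ν := by
          apply Finset.sum_congr rfl; intro κ _
          unfold Gam
          simp only [Finset.mul_sum]
          exact Finset.sum_congr rfl fun ρ _ => by rw [hk ρ κ, hdg lam κ σ]; ring
  calc (∑ κ : Fin n, g lam κ * dGam k dk dg ddg κ μ ν σ)
      = ∑ κ : Fin n, ∑ ρ : Fin n, (g lam κ * dk κ ρ σ * ((1/2) * Aform dg ρ μ ν)
          + g lam κ * k κ ρ * ((1/2) * (ddg ρ ν μ σ + ddg ρ μ ν σ - ddg μ ν ρ σ))) := by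
        apply Finset.sum_congr rfl; intro κ _
        unfold dGam
        simp only [Finset.mul_sum]
        exact Finset.sum_congr rfl fun ρ _ => by ring
    _ = ∑ ρ : Fin n, ∑ κ : Fin n, (g lam κ * dk κ ρ σ * ((1/2) * Aform dg ρ μ ν)
          + g lam κ * k κ ρ * ((1/2) * (ddg ρ ν μ σ + ddg ρ μ ν σ - ddg μ ν ρ σ))) :=
        Finset.sum_comm
    _ = ∑ ρ : Fin n, ((∑ κ : Fin n, g lam κ * dk κ ρ σ) * ((1/2) * Aform dg ρ μ ν)
          + (∑ κ : Fin n, g lam κ * k κ ρ) *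
              ((1/2) * (ddg ρ ν μ σ + ddg ρ μ ν σ - ddg μ ν ρ σ))) := by
        apply Finset.sum_congr rfl; intro ρ _
        rw [Finset.sum_add_distrib, Finset.sum_mul, Finset.sum_mul]
    _ = (∑ ρ : Fin n, (-∑ κ : Fin n, k ρ κ * dg κ lam σ) * ((1/2) * Aform dg ρ μ ν))
        + (1/2) * (ddg lam ν μ σ + ddg lam μ ν σ - ddg μ ν lam σ) := by
        rw [Finset.sum_add_distrib]
        congr 1
        · exact Finset.sum_congr rfl fun ρ _ => by rw [keydk]
        · simp only [key, ite_mul, one_mul, zero_mul, Finset.sum_ite_eq, Finset.sum_ite_eq',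
            Finset.mem_univ, if_true]
    _ = (1/2) * (ddg lam ν μ σ + ddg lam μ ν σ - ddg μ ν lam σ)
        - ∑ α : Fin n, dg lam α σ * Gam k dg α μ ν := by
        rw [← e3]
        simp only [neg_mul, Finset.sum_neg_distrib]
        ring

lemma sum_comm_mul {n : ℕ} (f h : Fin n → ℝ) (F : Fin n → Fin n → ℝ) :
    (∑ κ : Fin n, f κ * ∑ ρ : Fin n, h ρ * F κ ρ)
      = ∑ ρ : Fin n, h ρ * ∑ κ : Fin n, f κ * F κ ρ := by
  calc (∑ κ : Fin n, f κ * ∑ ρ : Fin n, h ρ * F κ ρ)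
      = ∑ κ : Fin n, ∑ ρ : Fin n, h ρ * (f κ * F κ ρ) := by
        apply Finset.sum_congr rfl; intro κ _; rw [Finset.mul_sum]
        exact Finset.sum_congr rfl fun ρ _ => by ring
    _ = ∑ ρ : Fin n, ∑ κ : Fin n, h ρ * (f κ * F κ ρ) := Finset.sum_comm
    _ = ∑ ρ : Fin n, h ρ * ∑ κ : Fin n, f κ * F κ ρ :=
        Finset.sum_congr rfl fun ρ _ => (Finset.mul_sum _ _ _).symm

end Alg

noncomputable def LGam {n : ℕ} (k : Fin n → Fin n → ℝ) (dg dk : Fin n → Fin n → Fin n → ℝ)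
    (ddg : Fin n → Fin n → Fin n → Fin n → ℝ) (x : Fin n → ℝ) (dx : Fin n → Fin n → ℝ)
    (ddx : Fin n → Fin n → Fin n → ℝ) (κ μ ν : Fin n) : ℝ :=
  (∑ ρ : Fin n, x ρ * dGam k dk dg ddg κ μ ν ρ)
  - (∑ ρ : Fin n, dx κ ρ * Gam k dg ρ μ ν)
  + (∑ ρ : Fin n, dx ρ μ * Gam k dg κ ρ ν)
  + (∑ ρ : Fin n, dx ρ ν * Gam k dg κ μ ρ)
  + ddx κ μ ν

section Alg2
variable {n : ℕ} (g k : Fin n → Fin n → ℝ) (dg dk : Fin n → Fin n → Fin n → ℝ)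
  (ddg : Fin n → Fin n → Fin n → Fin n → ℝ) (x : Fin n → ℝ) (dx : Fin n → Fin n → ℝ)
  (ddx : Fin n → Fin n → Fin n → ℝ) (t : ℝ) (dt : Fin n → ℝ)

lemma alg_lowered
    (hg : ∀ a b, g a b = g b a) (hk : ∀ a b, k a b = k b a)
    (hkg : ∀ a b, (∑ ρ : Fin n, k a ρ * g ρ b) = if a = b then (1:ℝ) else 0)
    (hdg : ∀ a b c, dg a b c = dg b a c)
    (hddg1 : ∀ a b c d, ddg a b c d = ddg b a c d)
    (hddg2 : ∀ a b c d, ddg a b c d = ddg a b d c)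
    (hddx : ∀ a b c, ddx a b c = ddx a c b)
    (hdksymm : ∀ a b c, dk a b c = dk b a c)
    (hdk : ∀ a b c, (∑ ρ : Fin n, (dk a ρ c * g ρ b + k a ρ * dg ρ b c)) = 0)
    (hL : ∀ a b, (∑ α : Fin n, (x α * dg a b α + dx α a * g α b + dx α b * g a α)) = t * g a b)
    (hL' : ∀ a b c, (∑ α : Fin n, (dx α c * dg a b α + x α * ddg a b α c
        + ddx α c a * g α b + dx α a * dg α b c + ddx α c b * g a α + dx α b * dg a α c))
        = dt c * g a b + t * dg a b c)
    (lam μ ν : Fin n) :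
    (∑ κ : Fin n, g lam κ * LGam k dg dk ddg x dx ddx κ μ ν)
      = (1/2) * (dt μ * g lam ν + dt ν * g lam μ - dt lam * g μ ν) := by
  -- T1 : the ξ^ρ ∂_ρ Γ term, lowered
  have hT1 : (∑ κ : Fin n, g lam κ * ∑ ρ : Fin n, x ρ * dGam k dk dg ddg κ μ ν ρ)
      = (∑ ρ : Fin n, x ρ * ((1/2) * (ddg lam ν μ ρ + ddg lam μ ν ρ - ddg μ ν lam ρ)))
        - ∑ α : Fin n, Gam k dg α μ ν * ∑ ρ : Fin n, x ρ * dg lam α ρ := by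
    rw [sum_comm_mul (g lam) x (fun κ ρ => dGam k dk dg ddg κ μ ν ρ)]
    calc (∑ ρ : Fin n, x ρ * ∑ κ : Fin n, g lam κ * dGam k dk dg ddg κ μ ν ρ)
        = ∑ ρ : Fin n, (x ρ * ((1/2) * (ddg lam ν μ ρ + ddg lam μ ν ρ - ddg μ ν lam ρ))
            - x ρ * ∑ α : Fin n, Gam k dg α μ ν * dg lam α ρ) := by
          apply Finset.sum_congr rfl; intro ρ _
          rw [stepA g k dg dk ddg hg hk hkg hdg hdksymm hdk lam μ ν ρ]
          rw [mul_sub]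
          congr 1
          rw [Finset.mul_sum, Finset.mul_sum]
          exact Finset.sum_congr rfl fun α _ => by ring
      _ = (∑ ρ : Fin n, x ρ * ((1/2) * (ddg lam ν μ ρ + ddg lam μ ν ρ - ddg μ ν lam ρ)))
            - ∑ ρ : Fin n, x ρ * ∑ α : Fin n, Gam k dg α μ ν * dg lam α ρ := by
          rw [Finset.sum_sub_distrib]
      _ = (∑ ρ : Fin n, x ρ * ((1/2) * (ddg lam ν μ ρ + ddg lam μ ν ρ - ddg μ ν lam ρ)))
            - ∑ α : Fin n, Gam k dg α μ ν * ∑ ρ : Fin n, x ρ * dg lam α ρ := by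
          rw [sum_comm_mul x (fun α => Gam k dg α μ ν) (fun ρ α => dg lam α ρ)]
  -- T2 : lowering on the −(∂ξ)Γ term
  have hT2 : (∑ κ : Fin n, g lam κ * ∑ ρ : Fin n, dx κ ρ * Gam k dg ρ μ ν)
      = ∑ ρ : Fin n, Gam k dg ρ μ ν * ∑ κ : Fin n, g lam κ * dx κ ρ := by
    have e : ∀ κ, (∑ ρ : Fin n, dx κ ρ * Gam k dg ρ μ ν)
        = ∑ ρ : Fin n, Gam k dg ρ μ ν * dx κ ρ :=
      fun κ => Finset.sum_congr rfl fun ρ _ => by ring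
    simp only [e]
    exact sum_comm_mul (g lam) (fun ρ => Gam k dg ρ μ ν) (fun κ ρ => dx κ ρ)
  -- the bracket from hL
  have hbr : ∀ α, (∑ ρ : Fin n, x ρ * dg lam α ρ) + (∑ κ : Fin n, g lam κ * dx κ α)
      = t * g lam α - ∑ σ : Fin n, dx σ lam * g σ α := by
    intro α
    have h0 := hL lam α
    rw [Finset.sum_add_distrib, Finset.sum_add_distrib] at h0
    have h1 : (∑ β : Fin n, x β * dg lam α β) = ∑ β : Fin n, x β * dg lam α β := rfl
    have h2 : (∑ κ : Fin n, g lam κ * dx κ α) = ∑ κ : Fin n, dx κ α * g lam κ :=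
      Finset.sum_congr rfl fun κ _ => by ring
    rw [h2]; linarith
  -- combined Γ terms
  have hC : (∑ α : Fin n, Gam k dg α μ ν * ∑ ρ : Fin n, x ρ * dg lam α ρ)
        + (∑ ρ : Fin n, Gam k dg ρ μ ν * ∑ κ : Fin n, g lam κ * dx κ ρ)
      = t * ((1/2) * Aform dg lam μ ν)
        - ∑ σ : Fin n, dx σ lam * ((1/2) * Aform dg σ μ ν) := by
    calc (∑ α : Fin n, Gam k dg α μ ν * ∑ ρ : Fin n, x ρ * dg lam α ρ)
          + (∑ ρ : Fin n, Gam k dg ρ μ ν * ∑ κ : Fin n, g lam κ * dx κ ρ)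
        = ∑ α : Fin n, Gam k dg α μ ν
            * ((∑ ρ : Fin n, x ρ * dg lam α ρ) + (∑ κ : Fin n, g lam κ * dx κ α)) := by
          rw [← Finset.sum_add_distrib]
          exact Finset.sum_congr rfl fun α _ => by ring
      _ = ∑ α : Fin n, (g lam α * Gam k dg α μ ν * t
            - Gam k dg α μ ν * ∑ σ : Fin n, dx σ lam * g σ α) := by
          apply Finset.sum_congr rfl; intro α _
          rw [hbr α]; ring
      _ = t * (∑ α : Fin n, g lam α * Gam k dg α μ ν)
            - ∑ α : Fin n, Gam k dg α μ ν * ∑ σ : Fin n, dx σ lam * g σ α := by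
          rw [Finset.sum_sub_distrib, Finset.mul_sum]
          congr 1
          exact Finset.sum_congr rfl fun α _ => by ring
      _ = t * ((1/2) * Aform dg lam μ ν)
            - ∑ σ : Fin n, dx σ lam * ((1/2) * Aform dg σ μ ν) := by
          rw [stepB g k dg hg hk hkg lam μ ν]
          congr 1
          rw [sum_comm_mul (fun α => Gam k dg α μ ν) (fun σ => dx σ lam)
            (fun α σ => g σ α)]
          apply Finset.sum_congr rfl; intro σ _
          congr 1
          rw [← stepB g k dg hg hk hkg σ μ ν]
          exact Finset.sum_congr rfl fun α _ => by rw [hg σ α]; ring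
  -- T3, T4
  have hT3 : (∑ κ : Fin n, g lam κ * ∑ ρ : Fin n, dx ρ μ * Gam k dg κ ρ ν)
      = ∑ ρ : Fin n, dx ρ μ * ((1/2) * Aform dg lam ρ ν) := by
    rw [sum_comm_mul (g lam) (fun ρ => dx ρ μ) (fun κ ρ => Gam k dg κ ρ ν)]
    exact Finset.sum_congr rfl fun ρ _ => by rw [stepB g k dg hg hk hkg lam ρ ν]
  have hT4 : (∑ κ : Fin n, g lam κ * ∑ ρ : Fin n, dx ρ ν * Gam k dg κ μ ρ)
      = ∑ ρ : Fin n, dx ρ ν * ((1/2) * Aform dg lam μ ρ) := by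
    rw [sum_comm_mul (g lam) (fun ρ => dx ρ ν) (fun κ ρ => Gam k dg κ μ ρ)]
    exact Finset.sum_congr rfl fun ρ _ => by rw [stepB g k dg hg hk hkg lam μ ρ]
  -- Step F : the final identity from the differentiated conformal Killing equation
  have hF : (∑ ρ : Fin n, x ρ * (ddg lam ν μ ρ + ddg lam μ ν ρ - ddg μ ν lam ρ))
        + (∑ σ : Fin n, dx σ lam * Aform dg σ μ ν)
        + (∑ ρ : Fin n, dx ρ μ * Aform dg lam ρ ν)
        + (∑ ρ : Fin n, dx ρ ν * Aform dg lam μ ρ)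
        + 2 * (∑ κ : Fin n, g lam κ * ddx κ μ ν)
      = dt μ * g lam ν + dt ν * g lam μ - dt lam * g μ ν + t * Aform dg lam μ ν := by
    have h1 := hL' lam ν μ
    have h2 := hL' lam μ ν
    have h3 := hL' μ ν lam
    have hmerge : (∑ ρ : Fin n, x ρ * (ddg lam ν μ ρ + ddg lam μ ν ρ - ddg μ ν lam ρ))
          + (∑ σ : Fin n, dx σ lam * Aform dg σ μ ν)
          + (∑ ρ : Fin n, dx ρ μ * Aform dg lam ρ ν)
          + (∑ ρ : Fin n, dx ρ ν * Aform dg lam μ ρ)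
          + 2 * (∑ κ : Fin n, g lam κ * ddx κ μ ν)
        = ∑ α : Fin n, ((dx α μ * dg lam ν α + x α * ddg lam ν α μ
              + ddx α μ lam * g α ν + dx α lam * dg α ν μ + ddx α μ ν * g lam α
              + dx α ν * dg lam α μ)
            + (dx α ν * dg lam μ α + x α * ddg lam μ α ν
              + ddx α ν lam * g α μ + dx α lam * dg α μ ν + ddx α ν μ * g lam α
              + dx α μ * dg lam α ν)
            - (dx α lam * dg μ ν α + x α * ddg μ ν α lam
              + ddx α lam μ * g α ν + dx α μ * dg α ν lam + ddx α lam ν * g μ α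
              + dx α ν * dg μ α lam)) := by
      rw [Finset.mul_sum, ← Finset.sum_add_distrib, ← Finset.sum_add_distrib,
        ← Finset.sum_add_distrib, ← Finset.sum_add_distrib]
      apply Finset.sum_congr rfl; intro α _
      unfold Aform
      rw [hddg2 lam ν μ α, hddg2 lam μ ν α, hddg2 μ ν lam α, hddx α μ lam,
        hddx α ν lam, hddx α ν μ, hg μ α]
      ring
    rw [hmerge, Finset.sum_sub_distrib, Finset.sum_add_distrib, h1, h2, h3]
    unfold Aform; ring
  -- pull the 1/2's out
  have p1 : (∑ ρ : Fin n, x ρ * ((1/2) * (ddg lam ν μ ρ + ddg lam μ ν ρ - ddg μ ν lam ρ)))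
      = (1/2) * ∑ ρ : Fin n, x ρ * (ddg lam ν μ ρ + ddg lam μ ν ρ - ddg μ ν lam ρ) := by
    rw [Finset.mul_sum]; exact Finset.sum_congr rfl fun ρ _ => by ring
  have p2 : (∑ σ : Fin n, dx σ lam * ((1/2) * Aform dg σ μ ν))
      = (1/2) * ∑ σ : Fin n, dx σ lam * Aform dg σ μ ν := by
    rw [Finset.mul_sum]; exact Finset.sum_congr rfl fun σ _ => by ring
  have p3 : (∑ ρ : Fin n, dx ρ μ * ((1/2) * Aform dg lam ρ ν))
      = (1/2) * ∑ ρ : Fin n, dx ρ μ * Aform dg lam ρ ν := by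
    rw [Finset.mul_sum]; exact Finset.sum_congr rfl fun ρ _ => by ring
  have p4 : (∑ ρ : Fin n, dx ρ ν * ((1/2) * Aform dg lam μ ρ))
      = (1/2) * ∑ ρ : Fin n, dx ρ ν * Aform dg lam μ ρ := by
    rw [Finset.mul_sum]; exact Finset.sum_congr rfl fun ρ _ => by ring
  -- assemble
  have hsplit : (∑ κ : Fin n, g lam κ * LGam k dg dk ddg x dx ddx κ μ ν)
      = (∑ κ : Fin n, g lam κ * ∑ ρ : Fin n, x ρ * dGam k dk dg ddg κ μ ν ρ)
        - (∑ κ : Fin n, g lam κ * ∑ ρ : Fin n, dx κ ρ * Gam k dg ρ μ ν)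
        + (∑ κ : Fin n, g lam κ * ∑ ρ : Fin n, dx ρ μ * Gam k dg κ ρ ν)
        + (∑ κ : Fin n, g lam κ * ∑ ρ : Fin n, dx ρ ν * Gam k dg κ μ ρ)
        + (∑ κ : Fin n, g lam κ * ddx κ μ ν) := by
    unfold LGam
    rw [← Finset.sum_sub_distrib, ← Finset.sum_add_distrib, ← Finset.sum_add_distrib,
      ← Finset.sum_add_distrib]
    exact Finset.sum_congr rfl fun κ _ => by ring
  rw [p2] at hC
  rw [hsplit, hT1, hT2, hT3, hT4, p1, p3, p4]
  linear_combination (-1 : ℝ) * hC + (1/2) * hF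

lemma alg_main
    (hg : ∀ a b, g a b = g b a) (hk : ∀ a b, k a b = k b a)
    (hkg : ∀ a b, (∑ ρ : Fin n, k a ρ * g ρ b) = if a = b then (1:ℝ) else 0)
    (hdg : ∀ a b c, dg a b c = dg b a c)
    (hddg1 : ∀ a b c d, ddg a b c d = ddg b a c d)
    (hddg2 : ∀ a b c d, ddg a b c d = ddg a b d c)
    (hddx : ∀ a b c, ddx a b c = ddx a c b)
    (hdksymm : ∀ a b c, dk a b c = dk b a c)
    (hdk : ∀ a b c, (∑ ρ : Fin n, (dk a ρ c * g ρ b + k a ρ * dg ρ b c)) = 0)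
    (hL : ∀ a b, (∑ α : Fin n, (x α * dg a b α + dx α a * g α b + dx α b * g a α)) = t * g a b)
    (hL' : ∀ a b c, (∑ α : Fin n, (dx α c * dg a b α + x α * ddg a b α c
        + ddx α c a * g α b + dx α a * dg α b c + ddx α c b * g a α + dx α b * dg a α c))
        = dt c * g a b + t * dg a b c)
    (κ μ ν : Fin n) :
    LGam k dg dk ddg x dx ddx κ μ ν
      = (1/2) * (dt μ * (if κ = ν then (1:ℝ) else 0)
          + dt ν * (if κ = μ then (1:ℝ) else 0)
          - (∑ ρ : Fin n, k κ ρ * dt ρ) * g μ ν) := by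
  have hlow := alg_lowered g k dg dk ddg x dx ddx t dt hg hk hkg hdg hddg1 hddg2 hddx
    hdksymm hdk hL hL'
  calc LGam k dg dk ddg x dx ddx κ μ ν
      = ∑ κ' : Fin n, (if κ = κ' then (1:ℝ) else 0) * LGam k dg dk ddg x dx ddx κ' μ ν := by
        simp only [ite_mul, one_mul, zero_mul, Finset.sum_ite_eq, Finset.sum_ite_eq',
          Finset.mem_univ, if_true]
    _ = ∑ κ' : Fin n, (∑ lam : Fin n, k κ lam * g lam κ') *
          LGam k dg dk ddg x dx ddx κ' μ ν :=
        Finset.sum_congr rfl fun κ' _ => by rw [hkg κ κ']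
    _ = ∑ κ' : Fin n, ∑ lam : Fin n, k κ lam *
          (g lam κ' * LGam k dg dk ddg x dx ddx κ' μ ν) := by
        apply Finset.sum_congr rfl; intro κ' _
        rw [Finset.sum_mul]
        exact Finset.sum_congr rfl fun lam _ => by ring
    _ = ∑ lam : Fin n, ∑ κ' : Fin n, k κ lam *
          (g lam κ' * LGam k dg dk ddg x dx ddx κ' μ ν) := Finset.sum_comm
    _ = ∑ lam : Fin n, k κ lam *
          ((1/2) * (dt μ * g lam ν + dt ν * g lam μ - dt lam * g μ ν)) := by
        apply Finset.sum_congr rfl; intro lam _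
        rw [← Finset.mul_sum, hlow lam μ ν]
    _ = ((1/2) * dt μ) * (∑ lam : Fin n, k κ lam * g lam ν)
          + ((1/2) * dt ν) * (∑ lam : Fin n, k κ lam * g lam μ)
          - ((1/2) * g μ ν) * (∑ lam : Fin n, k κ lam * dt lam) := by
        rw [Finset.mul_sum, Finset.mul_sum, Finset.mul_sum, ← Finset.sum_add_distrib,
          ← Finset.sum_sub_distrib]
        exact Finset.sum_congr rfl fun lam _ => by ring
    _ = (1/2) * (dt μ * (if κ = ν then (1:ℝ) else 0)
          + dt ν * (if κ = μ then (1:ℝ) else 0)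
          - (∑ ρ : Fin n, k κ ρ * dt ρ) * g μ ν) := by
        rw [hkg κ ν, hkg κ μ]; ring

end Alg2

lemma pd_christoffel {n : ℕ} (G K : (Fin n → ℝ) → Fin n → Fin n → ℝ)
    (hGsmooth : ∀ μ ν, ContDiff ℝ (⊤ : ℕ∞) fun q => G q μ ν)
    (hKsmooth : ∀ μ ν, ContDiff ℝ (⊤ : ℕ∞) fun q => K q μ ν)
    (κ μ ν σ : Fin n) (q : Fin n → ℝ) :
    pd (fun p => christoffel G K p κ μ ν) σ q
      = (1/2) * ∑ ρ : Fin n,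
          (pd (fun p => K p κ ρ) σ q *
             (pd (fun p => G p ρ ν) μ q + pd (fun p => G p ρ μ) ν q - pd (fun p => G p μ ν) ρ q)
           + K q κ ρ *
             (pd (fun p => pd (fun r => G r ρ ν) μ p) σ q
              + pd (fun p => pd (fun r => G r ρ μ) ν p) σ q
              - pd (fun p => pd (fun r => G r μ ν) ρ p) σ q)) := by
  have hbr : ∀ ρ : Fin n, ContDiff ℝ (⊤:ℕ∞) (fun p =>
      pd (fun r => G r ρ ν) μ p + pd (fun r => G r ρ μ) ν p - pd (fun r => G r μ ν) ρ p) :=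
    fun ρ => ((contDiff_pd (hGsmooth ρ ν) μ).add
      (contDiff_pd (hGsmooth ρ μ) ν)).sub (contDiff_pd (hGsmooth μ ν) ρ)
  have hsummand : ∀ ρ : Fin n, ContDiff ℝ (⊤:ℕ∞) (fun p => K p κ ρ *
      (pd (fun r => G r ρ ν) μ p + pd (fun r => G r ρ μ) ν p - pd (fun r => G r μ ν) ρ p)) :=
    fun ρ => (hKsmooth κ ρ).mul (hbr ρ)
  have h1 : (fun p => christoffel G K p κ μ ν)
      = fun p => (1/2) * ∑ ρ : Fin n, (K p κ ρ *
          (pd (fun r => G r ρ ν) μ p + pd (fun r => G r ρ μ) ν p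
            - pd (fun r => G r μ ν) ρ p)) := rfl
  rw [h1, pd_const_mul (DifferentiableAt.fun_sum (fun ρ _ => (hsummand ρ).dAt q)) (1/2) σ]
  congr 1
  rw [pd_sum (fun ρ => (hsummand ρ).dAt q) σ]
  apply Finset.sum_congr rfl; intro ρ _
  rw [pd_mul ((hKsmooth κ ρ).dAt q) ((hbr ρ).dAt q) σ]
  congr 1
  rw [pd_sub (((contDiff_pd (hGsmooth ρ ν) μ).add (contDiff_pd (hGsmooth ρ μ) ν)).dAt q)
      ((contDiff_pd (hGsmooth μ ν) ρ).dAt q) σ,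
    pd_add ((contDiff_pd (hGsmooth ρ ν) μ).dAt q) ((contDiff_pd (hGsmooth ρ μ) ν).dAt q) σ]

lemma pd_lieG {n : ℕ} (G K : (Fin n → ℝ) → Fin n → Fin n → ℝ)
    (hGsmooth : ∀ μ ν, ContDiff ℝ (⊤ : ℕ∞) fun q => G q μ ν)
    (hKsmooth : ∀ μ ν, ContDiff ℝ (⊤ : ℕ∞) fun q => K q μ ν)
    (ξ : (Fin n → ℝ) → Fin n → ℝ) (τ : (Fin n → ℝ) → ℝ)
    (hξsmooth : ContDiff ℝ (⊤ : ℕ∞) ξ)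
    (hτsmooth : ContDiff ℝ (⊤ : ℕ∞) τ)
    (hlieG : ∀ q μ ν, lieG ξ G q μ ν = τ q * G q μ ν) (q : Fin n → ℝ) :
    ∀ a b c : Fin n,
    (∑ α : Fin n, (pd (fun p => ξ p α) c q * pd (fun p => G p a b) α q
      + ξ q α * pd (fun p => pd (fun r => G r a b) α p) c q
      + pd (fun p => pd (fun r => ξ r α) a p) c q * G q α b
      + pd (fun p => ξ p α) a q * pd (fun p => G p α b) c q
      + pd (fun p => pd (fun r => ξ r α) b p) c q * G q a α
      + pd (fun p => ξ p α) b q * pd (fun p => G p a α) c q))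
      = pd τ c q * G q a b + τ q * pd (fun p => G p a b) c q := by
  intro a b c
  have hξc : ∀ α, ContDiff ℝ (⊤:ℕ∞) (fun p => ξ p α) := fun α => contDiff_pi.1 hξsmooth α
  have hs1 : ∀ α, ContDiff ℝ (⊤:ℕ∞) (fun p => ξ p α * pd (fun r => G r a b) α p) :=
    fun α => (hξc α).mul (contDiff_pd (hGsmooth a b) α)
  have hs2 : ∀ α, ContDiff ℝ (⊤:ℕ∞) (fun p => pd (fun r => ξ r α) a p * G p α b) :=
    fun α => (contDiff_pd (hξc α) a).mul (hGsmooth α b)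
  have hs3 : ∀ α, ContDiff ℝ (⊤:ℕ∞) (fun p => pd (fun r => ξ r α) b p * G p a α) :=
    fun α => (contDiff_pd (hξc α) b).mul (hGsmooth a α)
  have hfun : (fun p => lieG ξ G p a b) = (fun p => τ p * G p a b) :=
    funext fun p => hlieG p a b
  have hR : pd (fun p => τ p * G p a b) c q
      = pd τ c q * G q a b + τ q * pd (fun p => G p a b) c q :=
    pd_mul (hτsmooth.dAt q) ((hGsmooth a b).dAt q) c
  have hLdef : (fun p => lieG ξ G p a b)
      = fun p => ∑ α : Fin n, (ξ p α * pd (fun r => G r a b) α p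
          + pd (fun r => ξ r α) a p * G p α b
          + pd (fun r => ξ r α) b p * G p a α) := rfl
  calc (∑ α : Fin n, (pd (fun p => ξ p α) c q * pd (fun p => G p a b) α q
      + ξ q α * pd (fun p => pd (fun r => G r a b) α p) c q
      + pd (fun p => pd (fun r => ξ r α) a p) c q * G q α b
      + pd (fun p => ξ p α) a q * pd (fun p => G p α b) c q
      + pd (fun p => pd (fun r => ξ r α) b p) c q * G q a α
      + pd (fun p => ξ p α) b q * pd (fun p => G p a α) c q))
      = pd (fun p => lieG ξ G p a b) c q := by
        rw [hLdef, pd_sum (fun α => (((hs1 α).add (hs2 α)).add (hs3 α)).dAt q) c]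
        apply Finset.sum_congr rfl; intro α _
        rw [pd_add (((hs1 α).add (hs2 α)).dAt q) ((hs3 α).dAt q) c,
          pd_add ((hs1 α).dAt q) ((hs2 α).dAt q) c,
          pd_mul ((hξc α).dAt q) ((contDiff_pd (hGsmooth a b) α).dAt q) c,
          pd_mul ((contDiff_pd (hξc α) a).dAt q) ((hGsmooth α b).dAt q) c,
          pd_mul ((contDiff_pd (hξc α) b).dAt q) ((hGsmooth a α).dAt q) c]
        ring
    _ = pd τ c q * G q a b + τ q * pd (fun p => G p a b) c q := by rw [hfun, hR]
/-- if `£_ξ G = τ·G` then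
`£_ξ Γ^κ_{μν} = (1/2)(τ_{,μ} δ^κ_ν + τ_{,ν} δ^κ_μ − τ^{,κ} G_{μν})`. -/
theorem lie_derivative_of_christoffel_conformal (n : ℕ) (hn : 1 ≤ n)
    (G K : (Fin n → ℝ) → Fin n → Fin n → ℝ)
    (hGsmooth : ∀ μ ν, ContDiff ℝ (⊤ : ℕ∞) fun q => G q μ ν)
    (hKsmooth : ∀ μ ν, ContDiff ℝ (⊤ : ℕ∞) fun q => K q μ ν)
    (hGsymm : ∀ q μ ν, G q μ ν = G q ν μ)
    (hKsymm : ∀ q μ ν, K q μ ν = K q ν μ)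
    (hinv : ∀ q μ ν, (∑ ρ : Fin n, K q μ ρ * G q ρ ν) = if μ = ν then (1 : ℝ) else 0)
    (ξ : (Fin n → ℝ) → Fin n → ℝ) (τ : (Fin n → ℝ) → ℝ)
    (hξsmooth : ContDiff ℝ (⊤ : ℕ∞) ξ)
    (hτsmooth : ContDiff ℝ (⊤ : ℕ∞) τ)
    (hlieG : ∀ q μ ν, lieG ξ G q μ ν = τ q * G q μ ν) :
    ∀ q κ μ ν, lieGamma ξ (christoffel G K) q κ μ ν
      = (1 / 2) * (pd τ μ q * (if κ = ν then (1 : ℝ) else 0)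
          + pd τ ν q * (if κ = μ then (1 : ℝ) else 0)
          - (∑ ρ : Fin n, K q κ ρ * pd τ ρ q) * G q μ ν) := by
  intro q κ μ ν
  have hξc : ∀ a, ContDiff ℝ (⊤:ℕ∞) (fun p => ξ p a) := fun a => contDiff_pi.1 hξsmooth a
  have hdg : ∀ a b c, pd (fun p => G p a b) c q = pd (fun p => G p b a) c q := fun a b c =>
    congrArg (fun f => pd f c q) (funext fun p => hGsymm p a b)
  have hddg1 : ∀ a b c d, pd (fun p => pd (fun r => G r a b) c p) d q
      = pd (fun p => pd (fun r => G r b a) c p) d q := fun a b c d =>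
    congrArg (fun f => pd (fun p => pd f c p) d q) (funext fun r => hGsymm r a b)
  have hddg2 : ∀ a b c d, pd (fun p => pd (fun r => G r a b) c p) d q
      = pd (fun p => pd (fun r => G r a b) d p) c q := fun a b c d =>
    pd_comm (hGsmooth a b) c d q
  have hddx : ∀ a b c, pd (fun p => pd (fun r => ξ r a) c p) b q
      = pd (fun p => pd (fun r => ξ r a) b p) c q := fun a b c =>
    pd_comm (hξc a) c b q
  have hdksymm : ∀ a b c, pd (fun p => K p a b) c q = pd (fun p => K p b a) c q :=
    fun a b c => congrArg (fun f => pd f c q) (funext fun p => hKsymm p a b)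
  have hdk : ∀ a b c, (∑ ρ : Fin n, (pd (fun p => K p a ρ) c q * G q ρ b
      + K q a ρ * pd (fun p => G p ρ b) c q)) = 0 := by
    intro a b c
    have hfun : (fun p => ∑ ρ : Fin n, K p a ρ * G p ρ b)
        = (fun _ => if a = b then (1:ℝ) else 0) := funext fun p => hinv p a b
    have h0 : pd (fun p => ∑ ρ : Fin n, K p a ρ * G p ρ b) c q = 0 := by
      rw [hfun, pd_const]
    rw [pd_sum (fun ρ => (((hKsmooth a ρ).mul (hGsmooth ρ b)).dAt q)) c] at h0
    rw [← h0]
    exact Finset.sum_congr rfl fun ρ _ =>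
      (pd_mul ((hKsmooth a ρ).dAt q) ((hGsmooth ρ b).dAt q) c).symm
  have hL' := pd_lieG G K hGsmooth hKsmooth ξ τ hξsmooth hτsmooth hlieG q
  have key := alg_main (G q) (K q)
    (fun a b c => pd (fun p => G p a b) c q)
    (fun a b c => pd (fun p => K p a b) c q)
    (fun a b c d => pd (fun p => pd (fun r => G r a b) c p) d q)
    (ξ q)
    (fun a b => pd (fun p => ξ p a) b q)
    (fun a b c => pd (fun p => pd (fun r => ξ r a) c p) b q)
    (τ q) (fun a => pd τ a q)
    (fun a b => hGsymm q a b) (fun a b => hKsymm q a b) (fun a b => hinv q a b)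
    hdg hddg1 hddg2 hddx hdksymm hdk (fun a b => hlieG q a b) hL' κ μ ν
  have e1 : ∀ ρ : Fin n, pd (fun p => christoffel G K p κ μ ν) ρ q
      = dGam (K q)
        (fun a b c => pd (fun p => K p a b) c q)
        (fun a b c => pd (fun p => G p a b) c q)
        (fun a b c d => pd (fun p => pd (fun r => G r a b) c p) d q) κ μ ν ρ := by
    intro ρ
    rw [pd_christoffel G K hGsmooth hKsmooth κ μ ν ρ q]
    simp only [dGam, Aform]
  have e2 : ∀ a b c : Fin n, christoffel G K q a b c
      = Gam (K q) (fun a b c => pd (fun p => G p a b) c q) a b c := by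
    intro a b c
    simp only [Gam, Aform, christoffel]
  have hLG : lieGamma ξ (christoffel G K) q κ μ ν
      = LGam (K q)
        (fun a b c => pd (fun p => G p a b) c q)
        (fun a b c => pd (fun p => K p a b) c q)
        (fun a b c d => pd (fun p => pd (fun r => G r a b) c p) d q)
        (ξ q)
        (fun a b => pd (fun p => ξ p a) b q)
        (fun a b c => pd (fun p => pd (fun r => ξ r a) c p) b q) κ μ ν := by
    unfold lieGamma LGam
    simp only [e1, e2]
  rw [hLG]
  exact key
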